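/- Let w = pTSq and w' = pSTq be s/t-ballot words with s copies of S and t copies of T. Define Δ = (#STST(w)+#TSTS(w))/2 − (#STST(w')+#TSTS(w'))/2. Then Δ = #S(p)·t − (#T(p)+1)·s + #TS(w) − (s−1)(t−1)/2. -/

import Mathlib

inductive Letter | S | T
deriving DecidableEq, Repr

open Letter

/-- Number of occurrences of `u` as a (not necessarily contiguous) subsequence of `w`. -/
def cnt (u w : List Letter) : ℕ := w.sublists.count u


/-- `w` is an s/t-ballot word. -/
def IsBallot (s t : ℕ) (w : List Letter) : Prop :=
  w.count S = s ∧ w.count T = t ∧ ∀ p, p <+: w → p.count T * s ≤ p.count S * t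

noncomputable abbrev dcount (u : List Letter) (l : List (List Letter)) : ℕ :=
  @List.count _ instBEqOfDecidableEq u l

lemma count_conv (u : List Letter) (l : List (List Letter)) :
    dcount u l = @List.count _ List.instBEq u l := by
  unfold dcount
  rw [lawful_beq_subsingleton (instBEqOfDecidableEq (α := List Letter)) List.instBEq]

lemma cnt_eq (u w : List Letter) : cnt u w = dcount u w.sublists' := by
  unfold cnt
  rw [count_conv]
  rw [lawful_beq_subsingleton List.instBEq (instBEqOfDecidableEq (α := List Letter))]
  convert (List.sublists_perm_sublists' w).count_eq u using 2 <;> exact lawful_beq_subsingleton _ _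

lemma cnt_map_cons_nil (a : Letter) (L : List (List Letter)) :
    dcount [] (L.map (a :: ·)) = 0 := by
  rw [count_conv]
  refine List.count_eq_zero_of_not_mem ?_
  simp

lemma cnt_map_cons (b : Letter) (u' : List Letter) (a : Letter) (L : List (List Letter)) :
    dcount (b :: u') (L.map (a :: ·)) = if b = a then dcount u' L else 0 := by
  by_cases h : b = a
  · subst h
    rw [if_pos rfl]
    convert List.count_map_of_injective L (b :: ·) (fun x y h => by injection h) u' using 2 <;> exact lawful_beq_subsingleton _ _
  · rw [if_neg h, count_conv]
    refine List.count_eq_zero_of_not_mem ?_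
    simp only [List.mem_map]
    rintro ⟨x, -, hx⟩
    exact h (by injection hx.symm)

lemma cnt_cons_cons (b : Letter) (u' : List Letter) (a : Letter) (w : List Letter) :
    cnt (b :: u') (a :: w) = cnt (b :: u') w + if b = a then cnt u' w else 0 := by
  rw [cnt_eq _ (a :: w), List.sublists'_cons, count_conv, List.count_append,
    ← count_conv, ← count_conv, cnt_map_cons, ← cnt_eq, ← cnt_eq]

lemma cnt_nil_cons (a : Letter) (w : List Letter) : cnt [] (a :: w) = cnt [] w := by
  rw [cnt_eq _ (a :: w), List.sublists'_cons, count_conv, List.count_append,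
    ← count_conv, ← count_conv, cnt_map_cons_nil, ← cnt_eq]
  omega

lemma cnt_nil (w : List Letter) : cnt [] w = 1 := by
  induction w with
  | nil => simp [cnt]
  | cons a w ih => rw [cnt_nil_cons, ih]

lemma cnt_nil_w (u : List Letter) : cnt u [] = if u = [] then 1 else 0 := by
  cases u <;> simp [cnt]

lemma cnt1_append (x : Letter) (w₁ w₂ : List Letter) :
    cnt [x] (w₁ ++ w₂) = cnt [x] w₁ + cnt [x] w₂ := by
  induction w₁ with
  | nil => simp [cnt_nil_w]
  | cons a w ih =>
    simp only [List.cons_append, cnt_cons_cons, ih, cnt_nil]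
    by_cases h : x = a <;> simp [h, cnt_nil] <;> ring

lemma cnt2_append (x y : Letter) (w₁ w₂ : List Letter) :
    cnt [x,y] (w₁ ++ w₂) = cnt [x,y] w₁ + cnt [x] w₁ * cnt [y] w₂ + cnt [x,y] w₂ := by
  induction w₁ with
  | nil => simp [cnt_nil_w]
  | cons a w ih =>
    simp only [List.cons_append, cnt_cons_cons, ih, cnt1_append]
    by_cases h : x = a <;> simp [h, cnt_nil] <;> ring

lemma cnt3_append (x y z : Letter) (w₁ w₂ : List Letter) :
    cnt [x,y,z] (w₁ ++ w₂) = cnt [x,y,z] w₁ + cnt [x,y] w₁ * cnt [z] w₂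
      + cnt [x] w₁ * cnt [y,z] w₂ + cnt [x,y,z] w₂ := by
  induction w₁ with
  | nil => simp [cnt_nil_w]
  | cons a w ih =>
    simp only [List.cons_append, cnt_cons_cons, ih, cnt1_append, cnt2_append]
    by_cases h : x = a <;> simp [h, cnt_nil] <;> ring

lemma cnt4_append (x y z v : Letter) (w₁ w₂ : List Letter) :
    cnt [x,y,z,v] (w₁ ++ w₂) = cnt [x,y,z,v] w₁ + cnt [x,y,z] w₁ * cnt [v] w₂
      + cnt [x,y] w₁ * cnt [z,v] w₂ + cnt [x] w₁ * cnt [y,z,v] w₂ + cnt [x,y,z,v] w₂ := by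
  induction w₁ with
  | nil => simp [cnt_nil_w]
  | cons a w ih =>
    simp only [List.cons_append, cnt_cons_cons, ih, cnt1_append, cnt2_append, cnt3_append]
    by_cases h : x = a <;> simp [h, cnt_nil] <;> ring

lemma cnt_single (x : Letter) (w : List Letter) : cnt [x] w = w.count x := by
  induction w with
  | nil => simp [cnt_nil_w]
  | cons a w ih =>
    rw [cnt_cons_cons, ih, cnt_nil, List.count_cons]
    by_cases h : x = a
    · subst h; simp
    · have : ¬ a = x := fun hh => h hh.symm
      simp [h, this]

@[simp] lemma beq_SS : (S == S) = true := rfl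
@[simp] lemma beq_TT : (T == T) = true := rfl
@[simp] lemma beq_ST : (S == T) = false := rfl
@[simp] lemma beq_TS : (T == S) = false := rfl

lemma cnt_pair (w : List Letter) :
    cnt [S,T] w + cnt [T,S] w = w.count S * w.count T := by
  induction w with
  | nil => simp [cnt_nil_w]
  | cons a w ih =>
    cases a
    · simp only [cnt_cons_cons, cnt_single, List.count_cons, beq_SS, beq_ST, beq_TS, beq_TT,
        if_true, if_false, reduceIte, if_pos rfl, if_neg (show ¬ T = S from by decide), Bool.false_eq_true, if_false]
      linarith [ih, show (w.count S + 1) * w.count T = w.count S * w.count T + w.count T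
        from by ring]
    · simp only [cnt_cons_cons, cnt_single, List.count_cons, beq_SS, beq_ST, beq_TS, beq_TT,
        if_true, if_false, reduceIte, if_pos rfl, if_neg (show ¬ S = T from by decide), Bool.false_eq_true, if_false]
      linarith [ih, show w.count S * (w.count T + 1) = w.count S * w.count T + w.count S
        from by ring]

theorem stmt15 (s t : ℕ) (p q : List Letter)
    (hw : IsBallot s t (p ++ [T,S] ++ q)) (hw' : IsBallot s t (p ++ [S,T] ++ q)) :
    ((cnt [S,T,S,T] (p ++ [T,S] ++ q) + cnt [T,S,T,S] (p ++ [T,S] ++ q) : ℤ)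
        - (cnt [S,T,S,T] (p ++ [S,T] ++ q) + cnt [T,S,T,S] (p ++ [S,T] ++ q) : ℤ))
      = 2 * ((p.count S : ℤ) * t - ((p.count T : ℤ) + 1) * s
          + (cnt [T,S] (p ++ [T,S] ++ q) : ℤ))
        - ((s : ℤ) - 1) * ((t : ℤ) - 1) := by
  obtain ⟨hS, hT, -⟩ := hw
  clear hw'
  have hp' : (cnt [S,T] p : ℤ) + cnt [T,S] p = (p.count S : ℤ) * p.count T := by
    exact_mod_cast cnt_pair p
  have hq' : (cnt [S,T] q : ℤ) + cnt [T,S] q = (q.count S : ℤ) * q.count T := by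
    exact_mod_cast cnt_pair q
  rw [List.count_append, List.count_append] at hS hT
  simp only [List.count_cons, List.count_nil, beq_SS, beq_ST, beq_TS, beq_TT,
    if_true, if_false, reduceIte] at hS hT
  subst hS
  subst hT
  simp only [List.append_assoc]
  simp only [cnt4_append, cnt3_append, cnt2_append, cnt1_append]
  simp only [cnt_single, List.count_append, List.count_cons, List.count_nil,
    beq_SS, beq_ST, beq_TS, beq_TT, if_true, if_false, reduceIte,
    show cnt [S,T] [T,S] = 0 from by decide, show cnt [T,S] [T,S] = 1 from by decide,
    show cnt [S,T] [S,T] = 1 from by decide, show cnt [T,S] [S,T] = 0 from by decide,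
    show cnt [S,T,S] [T,S] = 0 from by decide, show cnt [T,S,T] [T,S] = 0 from by decide,
    show cnt [S,T,S] [S,T] = 0 from by decide, show cnt [T,S,T] [S,T] = 0 from by decide,
    show cnt [S,T,S,T] [T,S] = 0 from by decide, show cnt [T,S,T,S] [T,S] = 0 from by decide,
    show cnt [S,T,S,T] [S,T] = 0 from by decide, show cnt [T,S,T,S] [S,T] = 0 from by decide]
  push_cast
  linear_combination -hp' - hq'
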